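/- Antimirov derivation computes the left quotient of the denoted language: for every regular expression E over α and every letter a ∈ α, the union of the languages of the partial derivatives equals the left quotient of matches E by a, that is, ⋃_{H ∈ ∂ₐ(E)} matches H = { w : List α | a :: w ∈ matches E }. -/

import Mathlib

open RegularExpression
open scoped Computability

open scoped Classical in
/-- The finite set of *derived terms* of a regular expression. -/
noncomputable def derivedTerms {α : Type*} :
    RegularExpression α → Finset (RegularExpression α)
  | zero => ∅
  | epsilon => ∅
  | char _ => {1}
  | plus P Q => derivedTerms P ∪ derivedTerms Q
  | comp P Q => (derivedTerms P).image (fun K => K * Q) ∪ derivedTerms Q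
  | RegularExpression.star P => (derivedTerms P).image (fun K => K * RegularExpression.star P)

/-- The *literal length* of a regular expression: the number of occurrences
of letters of the alphabet in it. -/
def litLength {α : Type*} : RegularExpression α → ℕ
  | zero => 0
  | epsilon => 0
  | char _ => 1
  | plus P Q => litLength P + litLength Q
  | comp P Q => litLength P + litLength Q
  | RegularExpression.star P => litLength P

lemma cons_mem_kstar_iff {α : Type*} {l : Language α} {a : α} {w : List α} :
    a :: w ∈ l∗ ↔ ∃ u v, u ++ v = w ∧ a :: u ∈ l ∧ v ∈ l∗ := by
  constructor
  · intro h
    rw [Language.mem_kstar_iff_exists_nonempty] at h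
    obtain ⟨S, hjoin, hS⟩ := h
    cases S with
    | nil => simp at hjoin
    | cons s S =>
      obtain ⟨hs, hne⟩ := hS s (by simp)
      cases s with
      | nil => simp at hne
      | cons b u =>
        simp only [List.flatten_cons, List.cons_append, List.cons.injEq] at hjoin
        obtain ⟨rfl, hw⟩ := hjoin
        exact ⟨u, S.flatten, hw.symm, hs,
          Language.join_mem_kstar fun y hy => (hS y (by simp [hy])).1⟩
  · rintro ⟨u, v, rfl, hu, hv⟩
    have : (a :: u) ++ v ∈ l * l∗ := Language.append_mem_mul hu hv
    exact (mul_kstar_le_kstar : l * l∗ ≤ l∗) this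


lemma mem_biUnion_matches' {α : Type*} {s : Finset (RegularExpression α)} {w : List α} :
    w ∈ (⋃ H ∈ s, (H.matches' : Set (List α))) ↔ ∃ H, H ∈ s ∧ w ∈ H.matches' :=
  Set.mem_iUnion₂.trans ⟨fun ⟨H, h, hw⟩ => ⟨H, h, hw⟩, fun ⟨H, h, hw⟩ => ⟨H, h, hw⟩⟩

open scoped Classical in
/-- The finite set of *Antimirov partial derivatives* of a regular expression
with respect to a letter `a`. -/
noncomputable def aderiv {α : Type*} (a : α) :
    RegularExpression α → Finset (RegularExpression α)
  | zero => ∅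
  | epsilon => ∅
  | char b => if b = a then {1} else ∅
  | plus P Q => aderiv a P ∪ aderiv a Q
  | comp P Q =>
      if [] ∈ P.matches' then (aderiv a P).image (fun K => K * Q) ∪ aderiv a Q
      else (aderiv a P).image (fun K => K * Q)
  | RegularExpression.star P => (aderiv a P).image (fun K => K * RegularExpression.star P)

/-- Antimirov derivation computes the left quotient of the denoted language:
`⋃_{H ∈ ∂ₐ(E)} matches H = { w | a :: w ∈ matches E }`. -/
theorem aderiv_matches_eq_leftQuotient {α : Type*} [DecidableEq α]
    (E : RegularExpression α) (a : α) :
    (⋃ H ∈ aderiv a E, (H.matches' : Set (List α))) =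
      { w : List α | a :: w ∈ E.matches' } := by
  induction E with
  | zero => ext w; simp [aderiv, matches', ↓mem_biUnion_matches']
  | epsilon =>
    ext w; simp [aderiv, matches', Language.mem_one, ↓mem_biUnion_matches']
  | char b =>
    ext w
    by_cases h : b = a
    · subst h
      have h1 : aderiv b (char b) = {1} := by simp [aderiv]
      simp only [h1, Finset.mem_singleton, ↓mem_biUnion_matches', Set.mem_iUnion, Set.mem_setOf_eq,
        exists_prop, exists_eq_left, matches'_epsilon, matches'_char]
      rw [Language.mem_one]
      constructor
      · rintro rfl; rfl
      · intro hw
        have h2 : b :: w = [b] := hw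
        simpa using h2
    · have h1 : aderiv a (char b) = ∅ := by simp [aderiv, h]
      simp only [h1, Finset.notMem_empty, ↓mem_biUnion_matches', Set.mem_iUnion, Set.mem_setOf_eq,
        exists_prop, false_and, exists_false, false_iff, matches'_char]
      intro hw
      have h2 : a :: w = [b] := hw
      simp only [List.cons.injEq] at h2
      exact h h2.1.symm
  | plus P Q ihP ihQ =>
    ext w
    simp only [aderiv, Finset.mem_union, ↓mem_biUnion_matches', Set.mem_iUnion, Set.mem_setOf_eq,
      matches'_add, Language.mem_add, exists_prop]
    constructor
    · rintro ⟨H, h | h, hw⟩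
      · exact Or.inl ((Set.ext_iff.mp ihP w).mp (Set.mem_iUnion₂.mpr ⟨H, h, hw⟩))
      · exact Or.inr ((Set.ext_iff.mp ihQ w).mp (Set.mem_iUnion₂.mpr ⟨H, h, hw⟩))
    · rintro (h | h)
      · obtain ⟨H, hH, hw⟩ := Set.mem_iUnion₂.mp ((Set.ext_iff.mp ihP w).mpr h)
        exact ⟨H, Or.inl hH, hw⟩
      · obtain ⟨H, hH, hw⟩ := Set.mem_iUnion₂.mp ((Set.ext_iff.mp ihQ w).mpr h)
        exact ⟨H, Or.inr hH, hw⟩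
  | comp P Q ihP ihQ =>
    ext w
    simp only [aderiv, matches'_mul, Set.mem_setOf_eq, Language.mem_mul]
    by_cases hnull : [] ∈ P.matches'
    · simp only [if_pos hnull, Finset.mem_union, Finset.mem_image, ↓mem_biUnion_matches', Set.mem_iUnion,
        exists_prop]
      constructor
      · rintro ⟨H, (⟨K, hK, rfl⟩ | hH), hw⟩
        · rw [matches'_mul, Language.mem_mul] at hw
          obtain ⟨u, hu, v, hv, rfl⟩ := hw
          have : a :: u ∈ P.matches' :=
            (Set.ext_iff.mp ihP u).mp (Set.mem_iUnion₂.mpr ⟨K, hK, hu⟩)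
          exact ⟨a :: u, this, v, hv, rfl⟩
        · have : a :: w ∈ Q.matches' :=
            (Set.ext_iff.mp ihQ w).mp (Set.mem_iUnion₂.mpr ⟨H, hH, hw⟩)
          exact ⟨[], hnull, a :: w, this, rfl⟩
      · rintro ⟨u, hu, v, hv, huv⟩
        cases u with
        | nil =>
          simp only [List.nil_append] at huv; subst huv
          obtain ⟨H, hH, hw⟩ := Set.mem_iUnion₂.mp ((Set.ext_iff.mp ihQ w).mpr hv)
          exact ⟨H, Or.inr hH, hw⟩
        | cons b u =>
          simp only [List.cons_append, List.cons.injEq] at huv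
          obtain ⟨rfl, rfl⟩ := huv
          obtain ⟨K, hK, hu'⟩ := Set.mem_iUnion₂.mp ((Set.ext_iff.mp ihP u).mpr hu)
          exact ⟨K * Q, Or.inl ⟨K, hK, rfl⟩, by
            rw [matches'_mul, Language.mem_mul]; exact ⟨u, hu', v, hv, rfl⟩⟩
    · simp only [if_neg hnull, Finset.mem_image, ↓mem_biUnion_matches', Set.mem_iUnion, exists_prop]
      constructor
      · rintro ⟨H, ⟨K, hK, rfl⟩, hw⟩
        rw [matches'_mul, Language.mem_mul] at hw
        obtain ⟨u, hu, v, hv, rfl⟩ := hw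
        have : a :: u ∈ P.matches' :=
          (Set.ext_iff.mp ihP u).mp (Set.mem_iUnion₂.mpr ⟨K, hK, hu⟩)
        exact ⟨a :: u, this, v, hv, rfl⟩
      · rintro ⟨u, hu, v, hv, huv⟩
        cases u with
        | nil => exact absurd hu hnull
        | cons b u =>
          simp only [List.cons_append, List.cons.injEq] at huv
          obtain ⟨rfl, rfl⟩ := huv
          obtain ⟨K, hK, hu'⟩ := Set.mem_iUnion₂.mp ((Set.ext_iff.mp ihP u).mpr hu)
          exact ⟨K * Q, ⟨K, hK, rfl⟩, by
            rw [matches'_mul, Language.mem_mul]; exact ⟨u, hu', v, hv, rfl⟩⟩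
  | star P ihP =>
    ext w
    simp only [aderiv, matches'_star, Set.mem_setOf_eq, Finset.mem_image,
      ↓mem_biUnion_matches', Set.mem_iUnion, cons_mem_kstar_iff, exists_prop]
    constructor
    · rintro ⟨H, ⟨K, hK, rfl⟩, hw⟩
      rw [matches'_mul, Language.mem_mul] at hw
      obtain ⟨u, hu, v, hv, rfl⟩ := hw
      rw [matches'_star] at hv
      exact ⟨u, v, rfl, (Set.ext_iff.mp ihP u).mp (Set.mem_iUnion₂.mpr ⟨K, hK, hu⟩), hv⟩
    · rintro ⟨u, v, rfl, hu, hv⟩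
      obtain ⟨K, hK, hu'⟩ := Set.mem_iUnion₂.mp ((Set.ext_iff.mp ihP u).mpr hu)
      exact ⟨K * P.star, ⟨K, hK, rfl⟩, by
        rw [matches'_mul, matches'_star, Language.mem_mul]; exact ⟨u, hu', v, hv, rfl⟩⟩
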